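/- Let H : (ℝ^d)^m → ℝ be continuously differentiable and S a skew-symmetric (md)×(md) real matrix. Suppose z^{n+1} = (z̃₁^{n+1},…,z̃_m^{n+1}) satisfies the general partitioned AVF update: for each group k, the k-th block of (z^{n+1}-z^n)/τ equals the k-th block of S applied to the vector whose k-th block is ∫₀¹ H_{z̃_k}(z̃₁^{n+1},…,z̃_{k-1}^{n+1}, ξz̃_k^{n+1}+(1-ξ)z̃_k^n, z̃_{k+1}^n,…,z̃_m^n) dξ. Then H(z^{n+1}) = H(z^n). -/

import Mathlib

open MeasureTheory

theorem general_pavf_energy_preservation {d m : ℕ}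
    (H : (Fin m → Fin d → ℝ) → ℝ) (hH : ContDiff ℝ 1 H)
    (Hk : Fin m → (Fin m → Fin d → ℝ) → (Fin d → ℝ))
    (hHk : ∀ k z i, Hk k z i = fderiv ℝ H z (Pi.single k (Pi.single i 1)))
    (S : Matrix (Fin m × Fin d) (Fin m × Fin d) ℝ)
    (hS : S.transpose = -S)
    (τ : ℝ) (hτ : τ ≠ 0)
    (z0 z1 : Fin m → Fin d → ℝ)
    (hupdate : ∀ k i, (z1 k i - z0 k i) / τ =
      S.mulVec (fun ki => ∫ ξ in (0:ℝ)..1,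
        Hk ki.1 (fun j => if (j : ℕ) < (ki.1 : ℕ) then z1 j
          else if j = ki.1 then ξ • z1 ki.1 + (1 - ξ) • z0 ki.1
          else z0 j) ki.2) (k, i)) :
    H z1 = H z0 := by
  classical
  set g : Fin m × Fin d → ℝ := fun ki => ∫ ξ in (0:ℝ)..1,
      Hk ki.1 (fun j => if (j : ℕ) < (ki.1 : ℕ) then z1 j
        else if j = ki.1 then ξ • z1 ki.1 + (1 - ξ) • z0 ki.1
        else z0 j) ki.2 with hgdef
  set F : Fin m → ℝ → (Fin m → Fin d → ℝ) := fun k ξ j =>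
      if (j : ℕ) < (k : ℕ) then z1 j
      else if j = k then ξ • z1 k + (1 - ξ) • z0 k
      else z0 j with hFdef
  set w : ℕ → (Fin m → Fin d → ℝ) := fun n j => if (j : ℕ) < n then z1 j else z0 j with hwdef
  -- fderiv applied to a single-block vector
  have hfd : ∀ (x : Fin m → Fin d → ℝ) (k : Fin m) (v : Fin d → ℝ),
      fderiv ℝ H x (Pi.single k v) = ∑ i, v i * Hk k x i := by
    intro x k v
    have hv : (Pi.single k v : Fin m → Fin d → ℝ)
        = ∑ i, v i • (Pi.single k (Pi.single i (1:ℝ)) : Fin m → Fin d → ℝ) := by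
      funext j
      by_cases h : j = k
      · subst h
        funext i'
        simp [Finset.sum_apply, Pi.single_apply]
      · simp [Pi.single_eq_of_ne h, Finset.sum_apply]
    rw [hv, map_sum]
    refine Finset.sum_congr rfl fun i _ => ?_
    rw [(fderiv ℝ H x).map_smul, smul_eq_mul, hHk]
  -- continuity of F in ξ
  have hFcont : ∀ k : Fin m, Continuous (F k) := by
    intro k
    refine continuous_pi fun j => ?_
    simp only [hFdef]
    by_cases h1 : (j : ℕ) < (k : ℕ)
    · simp only [h1, if_true]; exact continuous_const
    · simp only [h1, if_false]
      by_cases h2 : j = k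
      · simp only [h2, if_true, eq_self_iff_true]
        exact (continuous_id.smul continuous_const).add
          ((continuous_const.sub continuous_id).smul continuous_const)
      · simp only [h2, if_false]; exact continuous_const
  -- continuity of Hk along F
  have hHkcont : ∀ (k : Fin m) (i : Fin d), Continuous fun ξ => Hk k (F k ξ) i := by
    intro k i
    have h1 : Continuous fun x => fderiv ℝ H x := hH.continuous_fderiv one_ne_zero
    have h2 : Continuous fun ξ => fderiv ℝ H (F k ξ) := h1.comp (hFcont k)
    have h3 : Continuous fun ξ =>
        fderiv ℝ H (F k ξ) (Pi.single k (Pi.single i (1:ℝ))) :=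
      h2.clm_apply continuous_const
    simpa only [hHk] using h3
  -- derivative of H ∘ F k
  have hderiv : ∀ (k : Fin m) (ξ : ℝ),
      HasDerivAt (fun t => H (F k t)) (∑ i, (z1 k i - z0 k i) * Hk k (F k ξ) i) ξ := by
    intro k ξ
    have hF' : HasDerivAt (F k) (Pi.single k (z1 k - z0 k)) ξ := by
      refine hasDerivAt_pi.2 fun j => ?_
      simp only [hFdef]
      by_cases h1 : (j : ℕ) < (k : ℕ)
      · have hne : j ≠ k := fun h => by simp [h] at h1
        simp only [h1, if_true, Pi.single_eq_of_ne hne]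
        exact hasDerivAt_const ξ (z1 j)
      · by_cases h2 : j = k
        · subst h2
          simp only [h1, if_false, if_pos rfl, Pi.single_eq_same]
          have ha : HasDerivAt (fun t : ℝ => t • z1 j) ((1:ℝ) • z1 j) ξ :=
            (hasDerivAt_id ξ).smul_const (z1 j)
          have hb : HasDerivAt (fun t : ℝ => (1 - t) • z0 j) (((0:ℝ) - 1) • z0 j) ξ :=
            ((hasDerivAt_const ξ (1:ℝ)).sub (hasDerivAt_id ξ)).smul_const (z0 j)
          have hab := ha.add hb
          have heq : (1:ℝ) • z1 j + ((0:ℝ) - 1) • z0 j = z1 j - z0 j := by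
            funext i; simp; ring
          rwa [heq] at hab
        · simp only [h1, if_false, h2, Pi.single_eq_of_ne h2]
          exact hasDerivAt_const ξ (z0 j)
    have hHd := (hH.differentiable one_ne_zero (F k ξ)).hasFDerivAt
    have hc := hHd.comp_hasDerivAt ξ hF'
    have : fderiv ℝ H (F k ξ) (Pi.single k (z1 k - z0 k))
        = ∑ i, (z1 k i - z0 k i) * Hk k (F k ξ) i := by
      rw [hfd]; simp
    rwa [this] at hc
  -- key integral identity for each group
  have hgroup : ∀ k : Fin m,
      H (F k 1) - H (F k 0) = ∑ i, (z1 k i - z0 k i) * g (k, i) := by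
    intro k
    have hint : ∀ i : Fin d, IntervalIntegrable
        (fun ξ => (z1 k i - z0 k i) * Hk k (F k ξ) i) volume 0 1 :=
      fun i => (continuous_const.mul (hHkcont k i)).intervalIntegrable 0 1
    have hintsum : IntervalIntegrable
        (fun ξ => ∑ i, (z1 k i - z0 k i) * Hk k (F k ξ) i) volume 0 1 :=
      (continuous_finset_sum _ fun i _ =>
        continuous_const.mul (hHkcont k i)).intervalIntegrable 0 1
    have hftc : ∫ ξ in (0:ℝ)..1, ∑ i, (z1 k i - z0 k i) * Hk k (F k ξ) i
        = H (F k 1) - H (F k 0) :=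
      intervalIntegral.integral_eq_sub_of_hasDerivAt (fun t _ => hderiv k t) hintsum
    rw [← hftc, intervalIntegral.integral_finset_sum (fun i _ => hint i)]
    refine Finset.sum_congr rfl fun i _ => ?_
    rw [intervalIntegral.integral_const_mul]
  -- F endpoints
  have hF0 : ∀ k : Fin m, F k 0 = w (k : ℕ) := by
    intro k; funext j
    simp only [hFdef, hwdef]
    by_cases h1 : (j : ℕ) < (k : ℕ)
    · simp [h1]
    · by_cases h2 : j = k
      · subst h2; simp [h1]
      · simp [h1, h2]
  have hF1 : ∀ k : Fin m, F k 1 = w ((k : ℕ) + 1) := by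
    intro k; funext j
    simp only [hFdef, hwdef]
    by_cases h1 : (j : ℕ) < (k : ℕ)
    · simp [h1, Nat.lt_succ_of_lt h1]
    · by_cases h2 : j = k
      · subst h2; simp [h1, Nat.lt_succ_self]
      · have h3 : ¬ ((j : ℕ) < (k : ℕ) + 1) := by
          have : (j : ℕ) ≠ (k : ℕ) := fun h => h2 (Fin.ext h)
          omega
        simp [h1, h2, h3]
  -- telescoping
  have hw0 : w 0 = z0 := by funext j; simp [hwdef]
  have hwm : w m = z1 := by funext j; simp [hwdef, j.isLt]
  have htel : H z1 - H z0 = ∑ n ∈ Finset.range m, (H (w (n+1)) - H (w n)) := by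
    rw [Finset.sum_range_sub (fun n => H (w n)), hw0, hwm]
  have hsum : H z1 - H z0 = ∑ k : Fin m, ∑ i, (z1 k i - z0 k i) * g (k, i) := by
    rw [htel, ← Fin.sum_univ_eq_sum_range (fun n => H (w (n+1)) - H (w n)) m]
    refine Finset.sum_congr rfl fun k _ => ?_
    rw [← hF0 k, ← hF1 k]
    exact hgroup k
  -- algebra with skew symmetry
  have hzd : ∀ k i, z1 k i - z0 k i = τ * S.mulVec g (k, i) := by
    intro k i
    have h := (div_eq_iff hτ).1 (hupdate k i)
    rw [h]; ring
  have hskew : dotProduct (S.mulVec g) g = 0 := by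
    have h1 : dotProduct (S.mulVec g) g = dotProduct g (S.mulVec g) :=
      dotProduct_comm _ _
    have h2 : dotProduct g (S.mulVec g) = dotProduct (S.vecMul g) g :=
      Matrix.dotProduct_mulVec g S g
    have h3 : S.vecMul g = S.transpose.mulVec g := (Matrix.mulVec_transpose S g).symm
    have h4 : S.transpose.mulVec g = -(S.mulVec g) := by rw [hS]; simp [Matrix.neg_mulVec]
    have h5 : dotProduct (S.mulVec g) g = -(dotProduct (S.mulVec g) g) := by
      conv_lhs => rw [h1, h2, h3, h4]
      rw [neg_dotProduct]
    linarith
  have hfin : H z1 - H z0 = 0 := by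
    rw [hsum]
    have heq : ∑ k : Fin m, ∑ i, (z1 k i - z0 k i) * g (k, i)
        = τ * dotProduct (S.mulVec g) g := by
      rw [dotProduct, Finset.mul_sum, Fintype.sum_prod_type]
      refine Finset.sum_congr rfl fun k _ => Finset.sum_congr rfl fun i _ => ?_
      rw [hzd k i]
      ring
    rw [heq, hskew, mul_zero]
  linarith
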